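/- Let F be a field with char F ≠ 2, δ ∈ F with δ ≠ 1 and δ ≠ −1, and assume the polynomial x² − 2δx + 1 has its roots ζ and ζ⁻¹ in F. Then there exist linearly independent elements s, t of the subspace V of 𝔖(δ) with s·s = 0 and t·t = 0, and every element w of 𝔖(δ) with w·w = 0 lies in F·s ∪ F·t; in particular, 𝔖(δ) contains exactly two 1-dimensional nilpotent subalgebras, both contained in V. -/

import Mathlib

namespace JordanHalf

variable {F : Type*} [Field F]

/-- The multiplication of the spin factor `𝔖(δ)` with respect to the basis
`1 = ![1,0,0]`, `u = ![0,1,0]`, `v = ![0,0,1]`, where the bilinear form on `V = ⟨u,v⟩`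
satisfies `b(u,u) = 1 = b(v,v)` and `b(u,v) = δ`. -/
def SmulFun (δ : F) (x y : Fin 3 → F) : Fin 3 → F :=
  ![x 0 * y 0 + x 1 * y 1 + x 2 * y 2 + δ * (x 1 * y 2 + x 2 * y 1),
    x 0 * y 1 + y 0 * x 1,
    x 0 * y 2 + y 0 * x 2]

end JordanHalf

open JordanHalf

/-- **Lemma (nilpotent basis, part (a)).** Suppose `char F ≠ 2`, `δ ≠ ±1`, and the
polynomial `x² − 2δx + 1` has its roots in `F`.  Then `𝔖(δ)` contains linearly
independent elements `s, t` of the subspace `V` (the elements with vanishing identity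
component) with `s⬝s = 0 = t⬝t`, and every `w` with `w⬝w = 0` lies in `F·s ∪ F·t`;
in particular `𝔖(δ)` has exactly two 1-dimensional nilpotent subalgebras, both in `V`. -/
theorem spin_nilpotent_lines {F : Type*} [Field F] (hchar : (2 : F) ≠ 0) (δ : F)
    (hδ1 : δ ≠ 1) (hδ2 : δ ≠ -1) (hroot : ∃ ζ : F, ζ ^ 2 - 2 * δ * ζ + 1 = 0) :
    ∃ s t : Fin 3 → F, s 0 = 0 ∧ t 0 = 0 ∧ LinearIndependent F ![s, t] ∧
      SmulFun δ s s = 0 ∧ SmulFun δ t t = 0 ∧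
      ∀ w : Fin 3 → F, SmulFun δ w w = 0 →
        w ∈ Submodule.span F {s} ∨ w ∈ Submodule.span F {t} := by
  obtain ⟨ζ, hζ⟩ := hroot
  have hζ0 : ζ ≠ 0 := by
    rintro rfl; norm_num at hζ
  set η := ζ⁻¹ with hη
  have hζη : ζ * η = 1 := mul_inv_cancel₀ hζ0
  have hsum : ζ + η = 2 * δ := by
    linear_combination η * hζ - (ζ - 2 * δ) * hζη
  have hne : ζ ≠ η := by
    intro h
    have h2 : ζ * ζ = 1 := by rw [h] at hζη ⊢; exact hζη
    have : (ζ - 1) * (ζ + 1) = 0 := by ring_nf; linear_combination h2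
    rcases mul_eq_zero.mp this with h1 | h1
    · have hz1 : ζ = 1 := by linear_combination h1
      rw [hz1] at hζ
      apply hδ1
      have h3 : 2 * δ = 2 * 1 := by linear_combination -hζ
      exact mul_left_cancel₀ hchar h3
    · have hz1 : ζ = -1 := by linear_combination h1
      rw [hz1] at hζ
      apply hδ2
      have h3 : 2 * δ = 2 * (-1) := by linear_combination hζ
      exact mul_left_cancel₀ hchar h3
  refine ⟨![0, 1, -ζ], ![0, 1, -η], rfl, rfl, ?_, ?_, ?_, ?_⟩
  · rw [LinearIndependent.pair_iff]
    intro a b hab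
    have h1 : a + b = 0 := by
      have := congrFun hab 1
      simpa using this
    have h2 : a * ζ + b * η = 0 := by
      have := congrFun hab 2
      simp at this
      linear_combination -this
    have ha : a * (ζ - η) = 0 := by
      have hb : b = -a := by linear_combination h1
      rw [hb] at h2; linear_combination h2
    have ha0 : a = 0 := by
      rcases mul_eq_zero.mp ha with h | h
      · exact h
      · exact absurd (sub_eq_zero.mp h) hne
    refine ⟨ha0, ?_⟩
    rw [ha0] at h1; linear_combination h1
  · funext i
    fin_cases i <;> simp [SmulFun]
    linear_combination hζ
  · funext i
    fin_cases i <;> simp [SmulFun]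
    have hq : η ^ 2 - 2 * δ * η + 1 = 0 := by
      have expand : η ^ 2 - 2 * δ * η + 1 = η ^ 2 * (ζ ^ 2 - 2 * δ * ζ + 1) := by
        linear_combination -(1 + ζ * η - 2 * δ * η) * hζη
      rw [expand, hζ, mul_zero]
    linear_combination hq
  · intro w hw
    have h1 : 2 * (w 0 * w 1) = 0 := by
      have := congrFun hw 1
      simp [SmulFun] at this
      linear_combination this
    have h2 : 2 * (w 0 * w 2) = 0 := by
      have := congrFun hw 2
      simp [SmulFun] at this
      linear_combination this
    have h0 : w 0 * w 0 + w 1 * w 1 + w 2 * w 2 + δ * (w 1 * w 2 + w 2 * w 1) = 0 := by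
      have := congrFun hw 0
      simpa [SmulFun] using this
    by_cases hw0 : w 0 = 0
    · -- w in V
      by_cases hw1 : w 1 = 0
      · -- then w 2 = 0, w = 0
        have hw2 : w 2 = 0 := by
          have : w 2 * w 2 = 0 := by rw [hw0, hw1] at h0; linear_combination h0
          exact mul_self_eq_zero.mp this
        left
        have : w = 0 := by
          funext i; fin_cases i <;> assumption
        rw [this]; exact Submodule.zero_mem _
      · -- factor
        have hq : (w 2 + ζ * w 1) * (w 2 + η * w 1) = 0 := by
          rw [hw0] at h0
          have expand : (w 2 + ζ * w 1) * (w 2 + η * w 1)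
              = w 2 * w 2 + (ζ + η) * (w 1 * w 2) + (ζ * η) * (w 1 * w 1) := by ring
          rw [expand, hsum, hζη]
          linear_combination h0
        rcases mul_eq_zero.mp hq with h | h
        · left
          rw [Submodule.mem_span_singleton]
          refine ⟨w 1, ?_⟩
          funext i; fin_cases i <;> simp [hw0]
          linear_combination -h
        · right
          rw [Submodule.mem_span_singleton]
          refine ⟨w 1, ?_⟩
          funext i; fin_cases i <;> simp [hw0]
          linear_combination -h
    · exfalso
      have hw1 : w 1 = 0 := by
        rcases mul_eq_zero.mp ((mul_eq_zero.mp h1).resolve_left hchar) with h | h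
        · exact absurd h hw0
        · exact h
      have hw2 : w 2 = 0 := by
        rcases mul_eq_zero.mp ((mul_eq_zero.mp h2).resolve_left hchar) with h | h
        · exact absurd h hw0
        · exact h
      rw [hw1, hw2] at h0
      have : w 0 * w 0 = 0 := by linear_combination h0
      exact hw0 (mul_self_eq_zero.mp this)
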